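/- Let A be a finite alphabet, let F ⊆ A* be a recurrent set, and let X be an F-thin and F-maximal bifix code. Then X is left F-complete, i.e., every element of F is a suffix of some element of X*. -/

import Mathlib

/-! Common definitions: words over a finite alphabet `A` are terms of `List A`,
concatenation being the monoid operation of the free monoid `A*`. -/

namespace PaperDefs

variable {A : Type*}

/-- `w` belongs to the Kleene star `X*` of `X`: it is a (possibly empty)
concatenation of elements of `X`. -/
def InStar (X : Set (List A)) (w : List A) : Prop :=
  ∃ l : List (List A), (∀ u ∈ l, u ∈ X) ∧ l.flatten = w

/-- The language `X*`. -/
def star (X : Set (List A)) : Set (List A) := {w | InStar X w}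

/-- A prefix code: a nonempty set of nonempty words, none of which is a proper
prefix of another. -/
def IsPrefixCode (X : Set (List A)) : Prop :=
  X.Nonempty ∧ (∀ w ∈ X, w ≠ []) ∧ ∀ u ∈ X, ∀ v ∈ X, u <+: v → u = v

/-- A suffix code. -/
def IsSuffixCode (X : Set (List A)) : Prop :=
  X.Nonempty ∧ (∀ w ∈ X, w ≠ []) ∧ ∀ u ∈ X, ∀ v ∈ X, u <:+ v → u = v

/-- A bifix code. -/
def IsBifixCode (X : Set (List A)) : Prop := IsPrefixCode X ∧ IsSuffixCode X

/-- A factorial set contains all factors of its elements. -/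
def Factorial (F : Set (List A)) : Prop := ∀ w ∈ F, ∀ u, u <:+: w → u ∈ F

/-- A recurrent set. -/
def Recurrent (F : Set (List A)) : Prop :=
  Factorial F ∧ F.Nonempty ∧ F ≠ {[]} ∧ ∀ u ∈ F, ∀ v ∈ F, ∃ w, u ++ w ++ v ∈ F

/-- A uniformly recurrent set. -/
def UniformlyRecurrent (F : Set (List A)) : Prop :=
  Recurrent F ∧ ∀ u ∈ F, ∃ n : ℕ, ∀ w ∈ F, n ≤ w.length → u <:+: w

/-- A parse of `w` with respect to `X` : a triple `(v, x, u)` with `w = v x u`,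
`v` has no suffix in `X`, `x ∈ X*`, and `u` has no prefix in `X`. -/
def IsParse (X : Set (List A)) (w : List A) (p : List A × List A × List A) : Prop :=
  p.1 ++ p.2.1 ++ p.2.2 = w ∧ (¬ ∃ s ∈ X, s <:+ p.1) ∧ InStar X p.2.1 ∧
    ¬ ∃ s ∈ X, s <+: p.2.2

/-- `δ_X(w)`, the number of parses of `w` with respect to `X`. -/
noncomputable def delta (X : Set (List A)) (w : List A) : ℕ :=
  {p | IsParse X w p}.ncard

/-- The `F`-degree `d_F(X)` of `X`, as an extended natural number. -/
noncomputable def Fdeg (X F : Set (List A)) : ℕ∞ :=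
  ⨆ w ∈ F, (delta X w : ℕ∞)

/-- The degree `d(X)` of `X`. -/
noncomputable def deg (X : Set (List A)) : ℕ∞ := Fdeg X Set.univ

/-- An `F`-maximal bifix code. -/
def IsFMaximalBifixCode (F X : Set (List A)) : Prop :=
  IsBifixCode X ∧ X ⊆ F ∧ ∀ Y : Set (List A), IsBifixCode Y → Y ⊆ F → X ⊆ Y → Y = X

/-- An `F`-maximal prefix code. -/
def IsFMaximalPrefixCode (F X : Set (List A)) : Prop :=
  IsPrefixCode X ∧ X ⊆ F ∧ ∀ Y : Set (List A), IsPrefixCode Y → Y ⊆ F → X ⊆ Y → Y = X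

/-- `X` is `F`-thin: some word of `F` is not a factor of any element of `X`. -/
def FThin (F X : Set (List A)) : Prop := ∃ w ∈ F, ∀ x ∈ X, ¬ w <:+: x

/-- A rational (regular) language. -/
def IsRational (L : Set (List A)) : Prop :=
  ∃ (σ : Type) (_ : Fintype σ) (M : DFA A σ), ∀ w : List A, w ∈ M.accepts ↔ w ∈ L

/-- The syntactic congruence of the language `L`. -/
def SynEquiv (L : Set (List A)) (u v : List A) : Prop :=
  ∀ x y : List A, x ++ u ++ y ∈ L ↔ x ++ v ++ y ∈ L

/-- `η : A* → M` is (a realization of) the syntactic homomorphism onto the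
syntactic monoid of `L`. -/
structure IsSyntacticHom (L : Set (List A)) {M : Type*} [Monoid M] (η : List A → M) : Prop where
  map_nil : η [] = 1
  map_append : ∀ u v : List A, η (u ++ v) = η u * η v
  surj : Function.Surjective η
  syn : ∀ u v : List A, η u = η v ↔ SynEquiv L u v

section Green

variable {M : Type*} [Monoid M]

/-- The `J`-order: `MuM ⊆ MvM`. -/
def JLe (u v : M) : Prop := ∃ x y, u = x * v * y

/-- Green's relation `J`. -/
def JEquiv (u v : M) : Prop := JLe u v ∧ JLe v u

/-- Green's relation `R`. -/
def REquiv (u v : M) : Prop := (∃ x, v = u * x) ∧ (∃ x, u = v * x)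

/-- Green's relation `L`. -/
def LEquiv (u v : M) : Prop := (∃ x, v = x * u) ∧ (∃ x, u = x * v)

/-- Green's relation `H`. -/
def HEquiv (u v : M) : Prop := REquiv u v ∧ LEquiv u v

/-- Green's relation `D`. -/
def DEquiv (u v : M) : Prop := ∃ s, REquiv u s ∧ LEquiv s v

/-- The `H`-class of an element. -/
def HClass (e : M) : Set M := {m | HEquiv m e}

/-- Membership in the minimum ideal (minimum `J`-class) of `M`. -/
def InMinIdeal (m : M) : Prop := ∀ n : M, JLe m n

/-- `S` is a subgroup of the monoid `M`: a subsemigroup which is a group. -/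
def IsSubgroupIn (S : Set M) : Prop :=
  S.Nonempty ∧ (∀ x ∈ S, ∀ y ∈ S, x * y ∈ S) ∧
    ∃ e ∈ S, (∀ x ∈ S, e * x = x ∧ x * e = x) ∧ ∀ x ∈ S, ∃ y ∈ S, x * y = e ∧ y * x = e

/-- The subsets `S ⊆ M` and `T ⊆ N` (each closed under multiplication, e.g.
maximal subgroups) are isomorphic as groups: there is a multiplicative
bijection from `S` onto `T`. -/
def GroupIsoOn {N : Type*} [Monoid N] (S : Set M) (T : Set N) : Prop :=
  ∃ φ : M → N, Set.BijOn φ S T ∧ ∀ x ∈ S, ∀ y ∈ S, φ (x * y) = φ x * φ y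

end Green

/-- `m` belongs to `J_F(X)`, the minimum `J`-class of the syntactic monoid of
`X*` meeting the image of `F` under the syntactic homomorphism `η`. -/
def InFMinJ {M : Type*} [Monoid M] (η : List A → M) (F : Set (List A)) (m : M) : Prop :=
  (∃ w ∈ F, JEquiv m (η w)) ∧ ∀ w ∈ F, JLe m (η w)

/-- A group code: a prefix code `Z` defined by a transitive permutation
representation of `A*` on a finite set, `Z*` being the stabilizer of a point. -/
def IsGroupCode (Z : Set (List A)) : Prop :=
  IsPrefixCode Z ∧
  ∃ (Q : Type) (_ : Fintype Q) (q₀ : Q) (α : List A → Equiv.Perm Q),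
    α [] = 1 ∧ (∀ u v : List A, α (u ++ v) = α u * α v) ∧
    (∀ q q' : Q, ∃ w : List A, α w q = q') ∧
    (∀ w : List A, InStar Z w ↔ α w q₀ = q₀) ∧
    Z = {w : List A | α w q₀ = q₀ ∧ w ≠ [] ∧
          ¬ ∃ u v : List A, u ≠ [] ∧ v ≠ [] ∧ α u q₀ = q₀ ∧ α v q₀ = q₀ ∧ w = u ++ v}

/-- Vertices of the extension graph of `w` in `F`: the disjoint union of
`L(w)` and `R(w)`. -/
def ExtVertex (F : Set (List A)) (w : List A) : Sum A A → Prop :=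
  fun x => Sum.elim (fun a => a :: w ∈ F) (fun b => w ++ [b] ∈ F) x

/-- The edge relation of the extension graph of `w` in `F`. -/
def ExtRel (F : Set (List A)) (w : List A) : Sum A A → Sum A A → Prop :=
  fun x y =>
    match x, y with
    | Sum.inl a, Sum.inr b => a :: (w ++ [b]) ∈ F
    | _, _ => False

/-- The extension graph `G(w)` of `w` in `F`. -/
def extGraph (F : Set (List A)) (w : List A) :
    SimpleGraph {x : Sum A A // ExtVertex F w x} :=
  SimpleGraph.fromRel fun x y => ExtRel F w x.1 y.1

/-- `F` is connected: every extension graph of a word of `F` is connected. -/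
def ConnectedSet (F : Set (List A)) : Prop :=
  ∀ w ∈ F, (extGraph F w).Connected

/-- `F` is a tree set: every extension graph of a word of `F` is a tree. -/
def TreeSet (F : Set (List A)) : Prop :=
  ∀ w ∈ F, (extGraph F w).IsTree

/-- The alphabet of `F` is the whole of `A`. -/
def AlphabetIs (F : Set (List A)) : Prop := ∀ a : A, [a] ∈ F

/-- The left quotient `u⁻¹L`, i.e. the state reached from the initial state of
the minimal automaton of `L` by reading `u`. -/
def leftQuot (L : Set (List A)) (u : List A) : Set (List A) := {w | u ++ w ∈ L}

/-- The set of states of the minimal automaton of `L`: the nonempty left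
quotients of `L`. -/
def MinStates (L : Set (List A)) : Set (Set (List A)) :=
  {q | q.Nonempty ∧ ∃ u : List A, q = leftQuot L u}

/-- The (partial) transition of the minimal automaton: `q · v`; it is defined
when the resulting set is nonempty. -/
def stepW (q : Set (List A)) (v : List A) : Set (List A) := {w | v ++ w ∈ q}

/-- The rank of the word `v` in the minimal automaton of `L`: the number of
distinct states `q · v` with `q` a state such that `q · v` is defined. -/
noncomputable def wordRank (L : Set (List A)) (v : List A) : ℕ :=
  ((fun q => stepW q v) '' {q ∈ MinStates L | (stepW q v).Nonempty}).ncard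

/-- The set of first return words of `F` to `u`. -/
def ReturnWords (F : Set (List A)) (u : List A) : Set (List A) :=
  {v | v ≠ [] ∧ u ++ v ∈ F ∧ u <:+ u ++ v ∧
    ¬ ∃ x y : List A, x ≠ [] ∧ y ≠ [] ∧ u ++ v = x ++ u ++ y}

/-- A code: every word has at most one factorization into elements of `X`. -/
def IsCode (X : Set (List A)) : Prop :=
  ∀ l m : List (List A), (∀ u ∈ l, u ∈ X) → (∀ u ∈ m, u ∈ X) →
    l.flatten = m.flatten → l = m

/-- The set `I = Q_X · K` of images of states of the minimal automaton of `L`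
under (partial) transitions by words whose syntactic image lies in `K`. -/
def ImageSet (L : Set (List A)) {M : Type*} [Monoid M] (η : List A → M) (K : Set M) :
    Set (Set (List A)) :=
  {p | ∃ q ∈ MinStates L, ∃ v : List A, η v ∈ K ∧ (stepW q v).Nonempty ∧ p = stepW q v}

/-- A witness for "a finite monoid `M` together with a monoid homomorphism
`A* → M`". -/
structure FiniteMonoidHomWitness (A : Type*) where
  M : Type
  [fin : Fintype M]
  [mon : Monoid M]
  φ : List A → M
  map_nil : φ [] = 1
  map_append : ∀ u v : List A, φ (u ++ v) = φ u * φ v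

end PaperDefs


namespace Stmt18Aux

variable {A : Type}

/-- Greedy left factorization: every word splits as an `X`-star part followed by
a remainder with no prefix in `X`. -/
lemma greedy_exists (X : Set (List A)) (hnil : ∀ x ∈ X, x ≠ []) :
    ∀ (n : ℕ) (r : List A), r.length ≤ n →
      ∃ (l : List (List A)) (u : List A), (∀ b ∈ l, b ∈ X) ∧ l.flatten ++ u = r ∧
        ¬ ∃ x ∈ X, x <+: u := by
  intro n
  induction n with
  | zero =>
    intro r hr
    have hr0 : r = [] := List.eq_nil_of_length_eq_zero (Nat.le_zero.mp hr)
    subst hr0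
    refine ⟨[], [], by simp, by simp, ?_⟩
    rintro ⟨x, hx, hp⟩
    exact hnil x hx (List.prefix_nil.mp hp)
  | succ n ih =>
    intro r hr
    by_cases h : ∃ x ∈ X, x <+: r
    · obtain ⟨x, hx, t, hxt⟩ := h
      have hxne : x ≠ [] := hnil x hx
      have hxl : 1 ≤ x.length := by
        cases x with
        | nil => exact absurd rfl hxne
        | cons a l => simp
      have ht : t.length ≤ n := by
        have : x.length + t.length = r.length := by
          rw [← hxt]; simp
        omega
      obtain ⟨l, u, hl, hfl, hnp⟩ := ih t ht
      refine ⟨x :: l, u, ?_, ?_, hnp⟩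
      · intro b hb
        rcases List.mem_cons.mp hb with rfl | hb
        · exact hx
        · exact hl b hb
      · rw [← hxt, ← hfl]; simp
    · exact ⟨[], r, by simp, by simp, h⟩

/-- Uniqueness of the suffix-boundary in factorizations `v ++ l.flatten`
when `X` is a suffix code and `v` has no suffix in `X`. -/
lemma suffix_unique {X : Set (List A)}
    (hsc : ∀ u ∈ X, ∀ v ∈ X, u <:+ v → u = v) :
    ∀ (l₁ : List (List A)) (v₁ v₂ : List A) (l₂ : List (List A)),
      (∀ b ∈ l₁, b ∈ X) → (∀ b ∈ l₂, b ∈ X) →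
      (¬ ∃ x ∈ X, x <:+ v₁) → (¬ ∃ x ∈ X, x <:+ v₂) →
      v₁ ++ l₁.flatten = v₂ ++ l₂.flatten → v₁ = v₂ := by
  intro l₁
  induction l₁ using List.reverseRecOn with
  | nil =>
    intro v₁ v₂ l₂ h₁ h₂ hn₁ hn₂ heq
    rcases l₂.eq_nil_or_concat with rfl | ⟨L, b, rfl⟩
    · simpa using heq
    · exfalso
      refine hn₁ ⟨b, h₂ b (by simp), ⟨v₂ ++ L.flatten, ?_⟩⟩
      simp only [List.flatten_nil, List.append_nil] at heq
      rw [heq]; simp [List.append_assoc]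
  | append_singleton l₁' b₁ ih =>
    intro v₁ v₂ l₂ h₁ h₂ hn₁ hn₂ heq
    rcases l₂.eq_nil_or_concat with rfl | ⟨L₂, b₂, rfl⟩
    · exfalso
      refine hn₂ ⟨b₁, h₁ b₁ (by simp), ⟨v₁ ++ l₁'.flatten, ?_⟩⟩
      simp only [List.flatten_nil, List.append_nil] at heq
      rw [← heq]; simp [List.append_assoc]
    · have hb₁ : b₁ ∈ X := h₁ b₁ (by simp)
      have hb₂ : b₂ ∈ X := h₂ b₂ (by simp)
      have e : (v₁ ++ l₁'.flatten) ++ b₁ = (v₂ ++ L₂.flatten) ++ b₂ := by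
        simpa [List.append_assoc] using heq
      have s₁ : b₁ <:+ (v₂ ++ L₂.flatten) ++ b₂ := by rw [← e]; exact ⟨_, rfl⟩
      have s₂ : b₂ <:+ (v₂ ++ L₂.flatten) ++ b₂ := ⟨_, rfl⟩
      have hbb : b₁ = b₂ := by
        rcases List.suffix_or_suffix_of_suffix s₁ s₂ with h | h
        · exact hsc _ hb₁ _ hb₂ h
        · exact (hsc _ hb₂ _ hb₁ h).symm
      subst hbb
      have e' : v₁ ++ l₁'.flatten = v₂ ++ L₂.flatten := List.append_cancel_right e
      exact ih v₁ v₂ L₂ (fun b hb => h₁ b (by simp [hb]))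
        (fun b hb => h₂ b (by simp [hb])) hn₁ hn₂ e'

end Stmt18Aux

open PaperDefs in
theorem stmt_18 {A : Type} [Fintype A]
    (F X : Set (List A)) (hF : Recurrent F)
    (hThin : FThin F X) (hMax : IsFMaximalBifixCode F X) :
    ∀ w ∈ F, ∃ z, InStar X z ∧ w <:+ z := by
  classical
  obtain ⟨hFac, hFne, hFnee, hRec⟩ := hF
  obtain ⟨⟨hpc, hsc⟩, hXF, hmax⟩ := hMax
  obtain ⟨v, hvF, hv⟩ := hThin
  have hXne : X.Nonempty := hpc.1
  have hXnil : ∀ x ∈ X, x ≠ [] := hpc.2.1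
  -- Lemma A : every word of F is prefix- or suffix-comparable with X.
  have lemA : ∀ y ∈ F, (∃ x ∈ X, x <:+ y ∨ y <:+ x) ∨ (∃ x ∈ X, x <+: y ∨ y <+: x) := by
    intro y hyF
    by_contra hcon
    push_neg at hcon
    obtain ⟨h₁, h₂⟩ := hcon
    have hynil : y ≠ [] := by
      rintro rfl
      obtain ⟨x, hx⟩ := hXne
      exact (h₂ x hx).2 List.nil_prefix
    have hYP : IsPrefixCode (insert y X) := by
      refine ⟨⟨y, Set.mem_insert _ _⟩, ?_, ?_⟩
      · rintro z hz
        rcases Set.mem_insert_iff.mp hz with rfl | hz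
        · exact hynil
        · exact hXnil z hz
      · intro a ha b hb hab
        rcases Set.mem_insert_iff.mp ha with ha' | ha'
        · rcases Set.mem_insert_iff.mp hb with hb' | hb'
          · rw [ha', hb']
          · rw [ha'] at hab; exact absurd hab (h₂ b hb').2
        · rcases Set.mem_insert_iff.mp hb with hb' | hb'
          · rw [hb'] at hab; exact absurd hab (h₂ a ha').1
          · exact hpc.2.2 a ha' b hb' hab
    have hYS : IsSuffixCode (insert y X) := by
      refine ⟨⟨y, Set.mem_insert _ _⟩, ?_, ?_⟩
      · rintro z hz
        rcases Set.mem_insert_iff.mp hz with rfl | hz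
        · exact hynil
        · exact hXnil z hz
      · intro a ha b hb hab
        rcases Set.mem_insert_iff.mp ha with ha' | ha'
        · rcases Set.mem_insert_iff.mp hb with hb' | hb'
          · rw [ha', hb']
          · rw [ha'] at hab; exact absurd hab (h₁ b hb').2
        · rcases Set.mem_insert_iff.mp hb with hb' | hb'
          · rw [hb'] at hab; exact absurd hab (h₁ a ha').1
          · exact hsc.2.2 a ha' b hb' hab
    have hYF : insert y X ⊆ F := by
      intro z hz
      rcases Set.mem_insert_iff.mp hz with rfl | hz
      · exact hyF
      · exact hXF hz
    have hYeq := hmax (insert y X) ⟨hYP, hYS⟩ hYF (Set.subset_insert _ _)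
    have hyX : y ∈ X := hYeq ▸ Set.mem_insert y X
    exact (h₁ y hyX).1 (List.suffix_refl y)
  -- Main claim: every word of F is suffix-comparable with X.
  have star : ∀ w ∈ F, (∃ x ∈ X, x <:+ w) ∨ (∃ x ∈ X, w <:+ x) := by
    intro w hwF
    by_contra hcon
    push_neg at hcon
    obtain ⟨hns, hno⟩ := hcon
    have hwnil : w ≠ [] := by
      rintro rfl
      obtain ⟨x, hx⟩ := hXne
      exact hno x hx List.nil_suffix
    have hwlen : 1 ≤ w.length := List.length_pos_iff.mpr hwnil
    have hNS : ∀ q, w <:+ q → ¬ ∃ x ∈ X, x <:+ q := by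
      rintro q hq ⟨x, hx, hxq⟩
      rcases List.suffix_or_suffix_of_suffix hxq hq with h | h
      · exact hns x hx h
      · exact hno x hx h
    obtain ⟨c, hgF⟩ := hRec v hvF w hwF
    have hwg : w <:+ v ++ c ++ w := ⟨v ++ c, rfl⟩
    have hvg : v <+: v ++ c ++ w := by
      rw [List.append_assoc]; exact ⟨c ++ w, rfl⟩
    have hglen : 1 ≤ (v ++ c ++ w).length := le_trans hwlen hwg.length_le
    -- iterated occurrences of w
    have claimG : ∀ n : ℕ, ∃ m ∈ F, ∃ S : Finset (List A),
        S.card = n ∧ ∀ q ∈ S, q <+: m ∧ w <:+ q := by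
      intro n
      induction n with
      | zero => exact ⟨w, hwF, ∅, by simp, by simp⟩
      | succ n ih =>
        obtain ⟨m, hmF, S, hcard, hS⟩ := ih
        obtain ⟨c', hm'F⟩ := hRec m hmF w hwF
        refine ⟨m ++ c' ++ w, hm'F, insert (m ++ c' ++ w) S, ?_, ?_⟩
        · rw [Finset.card_insert_of_notMem, hcard]
          intro hmem
          have hle := (hS _ hmem).1.length_le
          simp only [List.length_append] at hle
          omega
        · intro q hq
          rcases Finset.mem_insert.mp hq with rfl | hq
          · exact ⟨List.prefix_refl _, ⟨m ++ c', by rw [List.append_assoc]⟩⟩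
          · refine ⟨(hS q hq).1.trans ?_, (hS q hq).2⟩
            rw [List.append_assoc]; exact ⟨c' ++ w, rfl⟩
    obtain ⟨m, hmF, S, hcard, hS⟩ := claimG ((v ++ c ++ w).length + 1)
    obtain ⟨e, hyF⟩ := hRec m hmF (v ++ c ++ w) hgF
    set g : List A := v ++ c ++ w with hgdef
    set y : List A := m ++ e ++ g with hydef
    have hgy : g <:+ y := ⟨m ++ e, rfl⟩
    have hmy : m <+: y := by rw [hydef, List.append_assoc]; exact ⟨e ++ g, rfl⟩
    have hgley : g.length ≤ y.length := hgy.length_le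
    have hynotS : y ∉ S := by
      intro hmem
      have hle := (hS y hmem).1.length_le
      rw [hydef] at hle
      simp only [List.length_append] at hle
      omega
    have hcard' : (insert y S).card = g.length + 2 := by
      rw [Finset.card_insert_of_notMem hynotS, hcard]
    have hsub1 : ((insert y S : Finset (List A)) : Set (List A)) ⊆
        {q | q <+: y ∧ ¬ ∃ x ∈ X, x <:+ q} := by
      intro q hq
      rcases Finset.mem_insert.mp hq with rfl | hq'
      · exact ⟨List.prefix_refl _, hNS _ (hwg.trans hgy)⟩
      · exact ⟨(hS q hq').1.trans hmy, hNS q (hS q hq').2⟩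
    have hS₁fin : {q | q <+: y ∧ ¬ ∃ x ∈ X, x <:+ q}.Finite :=
      Set.Finite.subset y.inits.finite_toSet
        (fun q hq => (List.mem_inits _ _).mpr hq.1)
    have hS₂fin : {u | u <:+ y ∧ ¬ ∃ x ∈ X, x <+: u}.Finite :=
      Set.Finite.subset y.tails.finite_toSet
        (fun u hu => (List.mem_tails _ _).mpr hu.1)
    have hex : ∀ r : List A, ∃ (l : List (List A)) (u : List A),
        (∀ b ∈ l, b ∈ X) ∧ l.flatten ++ u = r ∧ ¬ ∃ x ∈ X, x <+: u :=
      fun r => Stmt18Aux.greedy_exists X hXnil r.length r le_rfl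
    choose L U hLX hflat hNP using hex
    have hmapsto : ∀ q ∈ {q | q <+: y ∧ ¬ ∃ x ∈ X, x <:+ q},
        U (y.drop q.length) ∈ {u | u <:+ y ∧ ¬ ∃ x ∈ X, x <+: u} := by
      intro q hq
      have hqy : q ++ y.drop q.length = y := List.prefix_iff_eq_append.mp hq.1
      refine ⟨⟨q ++ (L (y.drop q.length)).flatten, ?_⟩, hNP _⟩
      rw [List.append_assoc, hflat _, hqy]
    have hinj : Set.InjOn (fun q => U (y.drop q.length))
        {q | q <+: y ∧ ¬ ∃ x ∈ X, x <:+ q} := by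
      intro q₁ h₁ q₂ h₂ heq
      simp only at heq
      have e₁ : (q₁ ++ (L (y.drop q₁.length)).flatten) ++ U (y.drop q₁.length) = y := by
        rw [List.append_assoc, hflat _]
        exact List.prefix_iff_eq_append.mp h₁.1
      have e₂ : (q₂ ++ (L (y.drop q₂.length)).flatten) ++ U (y.drop q₁.length) = y := by
        rw [heq, List.append_assoc, hflat _]
        exact List.prefix_iff_eq_append.mp h₂.1
      have e' : q₁ ++ (L (y.drop q₁.length)).flatten
          = q₂ ++ (L (y.drop q₂.length)).flatten :=
        List.append_cancel_right (e₁.trans e₂.symm)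
      exact Stmt18Aux.suffix_unique hsc.2.2 (L (y.drop q₁.length)) q₁ q₂ (L (y.drop q₂.length))
        (hLX _) (hLX _) h₁.2 h₂.2 e'
    have hcard12 : {q | q <+: y ∧ ¬ ∃ x ∈ X, x <:+ q}.ncard ≤
        {u | u <:+ y ∧ ¬ ∃ x ∈ X, x <+: u}.ncard :=
      Set.ncard_le_ncard_of_injOn _ hmapsto hinj hS₂fin
    have hlen2 : ∀ u ∈ {u | u <:+ y ∧ ¬ ∃ x ∈ X, x <+: u}, u.length ≤ g.length := by
      intro u hu
      by_contra hlong
      push_neg at hlong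
      have hgu : g <:+ u := by
        rcases List.suffix_or_suffix_of_suffix hgy hu.1 with h | h
        · exact h
        · exact absurd h.length_le (by omega)
      have hwu : w <:+ u := hwg.trans hgu
      have huF : u ∈ F := hFac y hyF u hu.1.isInfix
      rcases lemA u huF with ⟨x, hx, h | h⟩ | ⟨x, hx, h | h⟩
      · exact hNS u hwu ⟨x, hx, h⟩
      · exact hno x hx (hwu.trans h)
      · exact hu.2 ⟨x, hx, h⟩
      · exact hv x hx ((hvg.isInfix.trans hgu.isInfix).trans h.isInfix)
    have hub : {u | u <:+ y ∧ ¬ ∃ x ∈ X, x <+: u} ⊆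
        (((Finset.Icc (y.length - g.length) y.length).image (fun k => y.drop k) :
          Finset (List A)) : Set (List A)) := by
      intro u hu
      have hle := hlen2 u hu
      have hud : u = y.drop (y.length - u.length) := List.suffix_iff_eq_drop.mp hu.1
      refine Finset.mem_coe.mpr (Finset.mem_image.mpr ⟨y.length - u.length, ?_, hud.symm⟩)
      rw [Finset.mem_Icc]
      exact ⟨Nat.sub_le_sub_left hle _, Nat.sub_le _ _⟩
    have hcard2 : {u | u <:+ y ∧ ¬ ∃ x ∈ X, x <+: u}.ncard ≤ g.length + 1 := by
      calc {u | u <:+ y ∧ ¬ ∃ x ∈ X, x <+: u}.ncard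
          ≤ (((Finset.Icc (y.length - g.length) y.length).image (fun k => y.drop k) :
              Finset (List A)) : Set (List A)).ncard :=
            Set.ncard_le_ncard hub (Finset.finite_toSet _)
        _ = ((Finset.Icc (y.length - g.length) y.length).image (fun k => y.drop k)).card :=
            Set.ncard_coe_finset _
        _ ≤ (Finset.Icc (y.length - g.length) y.length).card := Finset.card_image_le
        _ = g.length + 1 := by rw [Nat.card_Icc]; omega
    have hcard1 : g.length + 2 ≤ {q | q <+: y ∧ ¬ ∃ x ∈ X, x <:+ q}.ncard := by
      calc (g.length + 2 : ℕ) = (insert y S).card := hcard'.symm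
        _ = ((insert y S : Finset (List A)) : Set (List A)).ncard :=
            (Set.ncard_coe_finset _).symm
        _ ≤ {q | q <+: y ∧ ¬ ∃ x ∈ X, x <:+ q}.ncard :=
            Set.ncard_le_ncard hsub1 hS₁fin
    omega
  -- conclude by induction on the length
  have key : ∀ n : ℕ, ∀ w ∈ F, w.length ≤ n → ∃ z, InStar X z ∧ w <:+ z := by
    intro n
    induction n with
    | zero =>
      intro w hwF hlen
      have hw : w = [] := List.eq_nil_of_length_eq_zero (Nat.le_zero.mp hlen)
      subst hw
      exact ⟨[], ⟨[], by simp, rfl⟩, List.nil_suffix⟩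
    | succ n ih =>
      intro w hwF hlen
      rcases star w hwF with ⟨x, hx, hxw⟩ | ⟨x, hx, hwx⟩
      · obtain ⟨w', hw'⟩ := hxw
        subst hw'
        have hw'F : w' ∈ F := hFac _ hwF w' (List.prefix_append w' x).isInfix
        have hxlen : 1 ≤ x.length := List.length_pos_iff.mpr (hXnil x hx)
        have hw'len : w'.length ≤ n := by
          have : (w' ++ x).length = w'.length + x.length := List.length_append
          omega
        obtain ⟨z, ⟨l, hl, hfl⟩, q, hq⟩ := ih w' hw'F hw'len
        refine ⟨z ++ x, ⟨l ++ [x], ?_, by simp [hfl]⟩, ⟨q, ?_⟩⟩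
        · intro b hb
          rcases List.mem_append.mp hb with hb | hb
          · exact hl b hb
          · rw [List.mem_singleton.mp hb]; exact hx
        · rw [← List.append_assoc, hq]
      · exact ⟨x, ⟨[x], by simpa using hx, by simp⟩, hwx⟩
  intro w hwF
  exact key w.length w hwF le_rfl
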